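/- Let c be an admissible coefficient function satisfying (Cubic values). Let i_1 ≠ i_2 and let γ = e_{i_1,j_1}+e_{i_1,j_1′}+e_{i_1,j_1″}+e_{i_2,j_2} ∈ ℤ^{μ_A−2}. If a_{i_1} ≥ 3, a_{i_2} ≥ 3, j_1′ ≥ 2 and j_2 ≥ 2, then c(γ,0) = 0. -/

import Mathlib

/- Common framework: Frobenius manifolds for orbifold projective lines ℙ¹_A,
   following Ishibashi–Shiraishi–Takahashi. -/

namespace FrobeniusUniqueness

/-- A point index `(i, j)` labelling a flat coordinate `t_{i,j}`. -/
abbrev Pt : Type := Fin 3 × ℕ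

/-- A non-negative element of `ℤ^{μ_A − 2}`: an exponent vector `α` with `α_{i,j} ∈ ℕ`. -/
abbrev Expv : Type := Pt →₀ ℕ

/-- The standard basis vector `e_{i,j}`. -/
noncomputable def e (i : Fin 3) (j : ℕ) : Expv := Finsupp.single (i, j) 1

/-- The length `|α|` of an exponent vector. -/
def len (α : Expv) : ℕ := α.sum fun _ n => n

/-- A point index `(i,j)` is valid if `1 ≤ j ≤ a_i − 1`. -/
def ValidPt (A : Fin 3 → ℕ) (p : Pt) : Prop := 1 ≤ p.2 ∧ p.2 ≤ A p.1 - 1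

/-- An exponent vector lies in `ℤ^{μ_A − 2}` iff it is supported on valid indices. -/
def Valid (A : Fin 3 → ℕ) (α : Expv) : Prop := ∀ p ∈ α.support, ValidPt A p

/-- The combinatorial factor `s_{a,b,c}`. -/
def sFactor (a b c : ℕ) : ℂ :=
  if a = b ∧ b = c then 6
  else if a ≠ b ∧ b ≠ c ∧ a ≠ c then 1
  else 2

/-- The index type for the flat coordinates `t_1`, `t_{i,j}`, `t_{μ_A}`. -/
inductive Idx : Type where
  | one : Idx
  | pt : Fin 3 → ℕ → Idx
  | mu : Idx
deriving DecidableEq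

/-- Validity of a flat coordinate index. -/
def ValidIdx (A : Fin 3 → ℕ) : Idx → Prop
  | .one => True
  | .pt i j => ValidPt A (i, j)
  | .mu => True

/-- The metric `η` in the frame `∂_1, ∂_{i,j}, ∂_{μ_A}`. -/
noncomputable def eta (A : Fin 3 → ℕ) : Idx → Idx → ℂ
  | .one, .mu => 1
  | .mu, .one => 1
  | .pt i j, .pt i' j' =>
      if i = i' ∧ j + j' = A i ∧ 1 ≤ j ∧ j ≤ A i - 1 then (A i : ℂ)⁻¹ else 0
  | _, _ => 0

/-- The point indices occurring in an `Idx`. -/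
def ptsOf : Idx → List Pt
  | .pt i j => [(i, j)]
  | _ => []

/-- The number of occurrences of `μ_A` in an `Idx`. -/
def muCount : Idx → ℕ
  | .mu => 1
  | _ => 0

/-- The factor produced when the monomial `t^{β + Σ_{p ∈ ps} e_p}` is differentiated by
`∏_{p ∈ ps} ∂_p`, leaving the monomial `t^β`. -/
noncomputable def dfac (β : Expv) : List Pt → ℕ
  | [] => 1
  | p :: ps =>
      ((β + ((ps.map fun q => (Finsupp.single q 1 : Expv)).sum) + Finsupp.single p 1 : Expv) p)
        * dfac β ps

/-- `der A c a b d β m` is the coefficient of `t^β · e^{m·t_{μ_A}}` in `∂_a ∂_b ∂_d F`, where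
`F = (1/2)t_1²t_{μ_A} + (1/2)t_1·Σ_{i,j}(1/a_i)t_{i,j}t_{i,a_i−j} + Σ_{α,m} c(α,m)t^α e^{m t_{μ_A}}`
is the potential of the coefficient function `c`.  In particular `∂_1∂_a∂_b F = η(∂_a,∂_b)`. -/
noncomputable def der (A : Fin 3 → ℕ) (c : Expv → ℕ → ℂ) (a b d : Idx) (β : Expv) (m : ℕ) : ℂ :=
  if a = .one then (if β = 0 ∧ m = 0 then eta A b d else 0)
  else if b = .one then (if β = 0 ∧ m = 0 then eta A a d else 0)
  else if d = .one then (if β = 0 ∧ m = 0 then eta A a b else 0)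
  else
    (m : ℂ) ^ (muCount a + muCount b + muCount d) *
      (dfac β (ptsOf a ++ ptsOf b ++ ptsOf d) : ℂ) *
      c (β + (((ptsOf a ++ ptsOf b ++ ptsOf d).map fun q => (Finsupp.single q 1 : Expv)).sum)) m

/-- The coefficient of `t^β · e^{m·t_{μ_A}}` in
`Σ_{σ,τ} ∂_a∂_b∂_σF · η^{στ} · ∂_τ∂_d∂_e F`, where `(η^{στ})` is the inverse matrix of
`(η_{στ})` (so the only nonzero entries are `η^{1,μ_A} = η^{μ_A,1} = 1` and
`η^{(i,j),(i,a_i−j)} = a_i`). -/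
noncomputable def quadTerm (A : Fin 3 → ℕ) (c : Expv → ℕ → ℂ) (a b d e' : Idx)
    (β : Expv) (m : ℕ) : ℂ :=
  ∑ x ∈ Finset.HasAntidiagonal.antidiagonal β, ∑ y ∈ Finset.HasAntidiagonal.antidiagonal m,
    (der A c a b .one x.1 y.1 * der A c .mu d e' x.2 y.2
     + der A c a b .mu x.1 y.1 * der A c .one d e' x.2 y.2
     + ∑ i : Fin 3, ∑ j ∈ Finset.Icc 1 (A i - 1),
         (A i : ℂ) * der A c a b (.pt i j) x.1 y.1 * der A c (.pt i (A i - j)) d e' x.2 y.2)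

/-- `χ_A = 1/a_1 + 1/a_2 + 1/a_3 − 1`. -/
noncomputable def chi (A : Fin 3 → ℕ) : ℚ := (A 0 : ℚ)⁻¹ + (A 1 : ℚ)⁻¹ + (A 2 : ℚ)⁻¹ - 1

/-- The degree of the monomial `t^α`: `Σ_{i,j} α_{i,j}·(a_i − j)/a_i`. -/
noncomputable def deg (A : Fin 3 → ℕ) (α : Expv) : ℚ :=
  α.sum fun p n => (n : ℚ) * (((A p.1 : ℚ) - (p.2 : ℚ)) / (A p.1 : ℚ))

/-- A coefficient function is admissible if it satisfies (Homogeneity) and the WDVV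
equations (coefficientwise, in the variables `t_{i,j}` and `e^{t_{μ_A}}`). -/
structure IsAdmissible (A : Fin 3 → ℕ) (c : Expv → ℕ → ℂ) : Prop where
  homog : ∀ α : Expv, Valid A α → ∀ m : ℕ, c α m ≠ 0 → deg A α + (m : ℚ) * chi A = 2
  wdvv : ∀ a b d e' : Idx, ValidIdx A a → ValidIdx A b → ValidIdx A d → ValidIdx A e' →
      ∀ β : Expv, Valid A β → ∀ m : ℕ,
        quadTerm A c a b d e' β m = quadTerm A c a d b e' β m

/-- (Cubic values). -/
def CubicValues (A : Fin 3 → ℕ) (c : Expv → ℕ → ℂ) : Prop :=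
  (∀ (i₁ i₂ i₃ : Fin 3) (j₁ j₂ j₃ : ℕ),
      ValidPt A (i₁, j₁) → ValidPt A (i₂, j₂) → ValidPt A (i₃, j₃) →
      ¬(i₁ = i₂ ∧ i₂ = i₃) → c (e i₁ j₁ + e i₂ j₂ + e i₃ j₃) 0 = 0) ∧
  (∀ (i : Fin 3) (j₁ j₂ j₃ : ℕ),
      ValidPt A (i, j₁) → ValidPt A (i, j₂) → ValidPt A (i, j₃) →
      sFactor j₁ j₂ j₃ * c (e i j₁ + e i j₂ + e i j₃) 0 =
        if j₁ + j₂ + j₃ = A i then (A i : ℂ)⁻¹ else 0)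

/-- (Normalization). -/
def Normalization (A : Fin 3 → ℕ) (c : Expv → ℕ → ℂ) : Prop :=
  (2 ≤ A 0 → c (e 0 1 + e 1 1 + e 2 1) 1 = 1) ∧
  (A 0 = 1 → A 0 < A 1 → c (e 1 1 + e 2 1) 1 = 1) ∧
  (A 0 = 1 → A 1 = 1 → A 1 < A 2 → c (e 2 1) 1 = 1) ∧
  (A 0 = 1 → A 1 = 1 → A 2 = 1 → c 0 1 = 1)

/-- (Separation). -/
def Separation (A : Fin 3 → ℕ) (c : Expv → ℕ → ℂ) : Prop :=
  ∀ γ : Expv, Valid A γ →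
    ∀ (i₁ i₂ : Fin 3) (j₁ j₂ : ℕ), i₁ ≠ i₂ → ValidPt A (i₁, j₁) → ValidPt A (i₂, j₂) →
      e i₁ j₁ + e i₂ j₂ ≤ γ → c γ 0 = 0

/-- The automorphism of `ℤ^{μ_A−2}` exchanging `e_{i₁,j}` and `e_{i₂,j}` for all `j`. -/
def swapExp (i₁ i₂ : Fin 3) (α : Expv) : Expv :=
  Finsupp.equivMapDomain ((Equiv.swap i₁ i₂).prodCongr (Equiv.refl ℕ)) α

/-- (Symmetry). -/
def Symmetry (A : Fin 3 → ℕ) (c : Expv → ℕ → ℂ) : Prop :=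
  ∀ i₁ i₂ : Fin 3, A i₁ = A i₂ → ∀ α : Expv, Valid A α → ∀ m : ℕ,
    c (swapExp i₁ i₂ α) m = c α m


section StepAux

variable {A : Fin 3 → ℕ} {c : Expv → ℕ → ℂ}

lemma dfac_pos (β : Expv) (l : List Pt) : 0 < dfac β l := by
  induction l with
  | nil => simp [dfac]
  | cons p ps ih =>
      simp only [dfac]
      refine Nat.mul_pos ?_ ih
      have h : ((β + ((ps.map fun q => (Finsupp.single q 1 : Expv)).sum) + Finsupp.single p 1 : Expv)) p
          = (β + ((ps.map fun q => (Finsupp.single q 1 : Expv)).sum)) p + 1 := by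
        rw [Finsupp.add_apply, Finsupp.single_eq_same]
      omega

lemma antidiagonal_single_one (w : Pt) :
    Finset.HasAntidiagonal.antidiagonal (Finsupp.single w 1 : Expv) =
      {((0 : Expv), Finsupp.single w 1), (Finsupp.single w 1, 0)} := by
  rw [Finsupp.antidiagonal_single]
  rw [show Finset.HasAntidiagonal.antidiagonal (1:ℕ) = {(0,1),(1,0)} by decide]
  simp [Finset.map_insert]

lemma der_mu_ptpt (d1 e1 : Fin 3) (d2 e2 : ℕ) (x : Expv) :
    der A c .mu (.pt d1 d2) (.pt e1 e2) x 0 = 0 := by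
  simp [der, muCount]

lemma der_ptpt_mu (d1 e1 : Fin 3) (d2 e2 : ℕ) (x : Expv) :
    der A c (.pt d1 d2) (.pt e1 e2) .mu x 0 = 0 := by
  simp [der, muCount]

lemma der_val (g1 g2 g3 : Fin 3) (u1 u2 u3 : ℕ) (β : Expv) :
    der A c (.pt g1 u1) (.pt g2 u2) (.pt g3 u3) β 0 =
      (dfac β [(g1,u1),(g2,u2),(g3,u3)] : ℂ) *
        c (β + Finsupp.single (g1,u1) 1 + Finsupp.single (g2,u2) 1 + Finsupp.single (g3,u3) 1) 0 := by
  simp [der, muCount, ptsOf, add_assoc]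

lemma validPt_mk {i : Fin 3} {j : ℕ} (h1 : 1 ≤ j) (h2 : j ≤ A i - 1) : ValidPt A (i, j) :=
  ⟨h1, h2⟩

lemma dfac0_cast (g : Fin 3) (u1 u2 u3 : ℕ) :
    (dfac 0 [(g,u1),(g,u2),(g,u3)] : ℂ) = sFactor u1 u2 u3 := by
  have h : dfac (0 : Expv) [(g,u1),(g,u2),(g,u3)] =
      (((if u2 = u1 then 1 else 0) + if u3 = u1 then 1 else 0) + 1) *
        ((if u3 = u2 then 1 else 0) + 1) := by
    simp [dfac, Finsupp.single_apply, Finsupp.add_apply]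
  rw [h]
  have e1 : (if u2 = u1 then (1:ℕ) else 0) = if u1 = u2 then 1 else 0 := by simp [eq_comm]
  have e2 : (if u3 = u1 then (1:ℕ) else 0) = if u1 = u3 then 1 else 0 := by simp [eq_comm]
  have e3 : (if u3 = u2 then (1:ℕ) else 0) = if u2 = u3 then 1 else 0 := by simp [eq_comm]
  rw [e1, e2, e3]
  by_cases h12 : u1 = u2 <;> by_cases h23 : u2 = u3 <;> by_cases h13 : u1 = u3 <;>
    first
      | (exfalso; omega)
      | (simp [sFactor, h12, h23, h13] <;>
          (first | (split_ifs <;> (first | (exfalso; omega) | norm_num)) | norm_num))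

lemma D3full (hA : ∀ i, 1 ≤ A i) (hcub : CubicValues A c) (g1 g2 g3 : Fin 3) (u1 u2 u3 : ℕ)
    (h1 : ValidPt A (g1,u1)) (h2 : ValidPt A (g2,u2)) (h3 : ValidPt A (g3,u3)) :
    der A c (.pt g1 u1) (.pt g2 u2) (.pt g3 u3) 0 0 =
      if g1 = g2 ∧ g2 = g3 ∧ u1 + u2 + u3 = A g1 then (A g1 : ℂ)⁻¹ else 0 := by
  rw [der_val, zero_add]
  have harg : (Finsupp.single (g1,u1) 1 + Finsupp.single (g2,u2) 1 + Finsupp.single (g3,u3) 1 : Expv)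
      = e g1 u1 + e g2 u2 + e g3 u3 := by simp [e]
  rw [harg]
  by_cases hg : g1 = g2 ∧ g2 = g3
  · obtain ⟨rfl, rfl⟩ := hg
    rw [dfac0_cast, hcub.2 g1 u1 u2 u3 h1 h2 h3]
    simp
  · rw [hcub.1 g1 g2 g3 u1 u2 u3 h1 h2 h3 hg, mul_zero]
    rw [if_neg (by tauto)]

lemma SUM1 (hA : ∀ i, 1 ≤ A i) (hcub : CubicValues A c) (g : Fin 3) (u v : ℕ)
    (hu : ValidPt A (g,u)) (hv : ValidPt A (g,v)) (f : Fin 3 → ℕ → ℂ) :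
    (∑ i, ∑ j ∈ Finset.Icc 1 (A i - 1),
        (A i : ℂ) * der A c (.pt g u) (.pt g v) (.pt i j) 0 0 * f i j)
      = if u + v < A g then f g (A g - (u + v)) else 0 := by
  have hAg : (A g : ℂ) ≠ 0 := Nat.cast_ne_zero.2 (by have := hA g; omega)
  have hsum : ∀ i : Fin 3, ∀ j ∈ Finset.Icc 1 (A i - 1),
      (A i : ℂ) * der A c (.pt g u) (.pt g v) (.pt i j) 0 0 * f i j
        = if g = i ∧ u + v + j = A g then f i j else 0 := by
    intro i j hj
    rw [Finset.mem_Icc] at hj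
    rw [D3full hA hcub g g i u v j hu hv ⟨hj.1, hj.2⟩]
    simp only [true_and]
    split_ifs with hcond
    · obtain ⟨rfl, -⟩ := hcond
      rw [mul_inv_cancel₀ hAg, one_mul]
    · rw [mul_zero, zero_mul]
  rw [Finset.sum_congr rfl fun i _ => Finset.sum_congr rfl (hsum i)]
  rw [Fintype.sum_eq_single g
    (fun i hi => Finset.sum_eq_zero fun j _ => if_neg (fun hc => hi hc.1.symm))]
  simp only [true_and]
  have hrw : ∀ j ∈ Finset.Icc 1 (A g - 1),
      (if u + v + j = A g then f g j else 0) = (if j = A g - (u + v) then f g j else 0) := by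
    intro j hj
    rw [Finset.mem_Icc] at hj
    exact if_congr (by omega) rfl rfl
  rw [Finset.sum_congr rfl hrw, Finset.sum_ite_eq']
  refine if_congr ?_ rfl rfl
  rw [Finset.mem_Icc]
  have h1 := hu.1; have h2 := hv.1
  omega

lemma SUM2 (hA : ∀ i, 1 ≤ A i) (hcub : CubicValues A c) (g : Fin 3) (u v : ℕ)
    (hu : ValidPt A (g,u)) (hv : ValidPt A (g,v)) (f : Fin 3 → ℕ → ℂ) :
    (∑ i, ∑ j ∈ Finset.Icc 1 (A i - 1),
        (A i : ℂ) * f i j * der A c (.pt i (A i - j)) (.pt g u) (.pt g v) 0 0)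
      = if u + v ≤ A g - 1 then f g (u + v) else 0 := by
  have hsum : ∀ i : Fin 3, ∀ j ∈ Finset.Icc 1 (A i - 1),
      (A i : ℂ) * f i j * der A c (.pt i (A i - j)) (.pt g u) (.pt g v) 0 0
        = if i = g ∧ j = u + v then f i j else 0 := by
    intro i j hj
    rw [Finset.mem_Icc] at hj
    have hAi : (A i : ℂ) ≠ 0 := Nat.cast_ne_zero.2 (by omega)
    rw [D3full hA hcub i g g (A i - j) u v (validPt_mk (by omega) (by omega)) hu hv]
    have hcond : (i = g ∧ g = g ∧ (A i - j) + u + v = A i) ↔ (i = g ∧ j = u + v) := by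
      constructor
      · rintro ⟨rfl, -, h⟩; exact ⟨rfl, by omega⟩
      · rintro ⟨rfl, rfl⟩; exact ⟨rfl, rfl, by omega⟩
    rw [if_congr hcond rfl rfl]
    split_ifs with h
    · obtain ⟨rfl, -⟩ := h
      rw [mul_comm ((A i : ℂ)) (f i j), mul_assoc, mul_inv_cancel₀ hAi, mul_one]
    · rw [mul_zero]
  rw [Finset.sum_congr rfl fun i _ => Finset.sum_congr rfl (hsum i)]
  rw [Fintype.sum_eq_single g
    (fun i hi => Finset.sum_eq_zero fun j _ => if_neg (fun hc => hi hc.1))]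
  simp only [true_and]
  rw [Finset.sum_ite_eq']
  refine if_congr ?_ rfl rfl
  rw [Finset.mem_Icc]
  have h1 := hu.1; have h2 := hv.1
  omega

lemma SUM0a (hA : ∀ i, 1 ≤ A i) (hcub : CubicValues A c) (g1 g2 : Fin 3) (hg : g1 ≠ g2) (u v : ℕ)
    (hu : ValidPt A (g1,u)) (hv : ValidPt A (g2,v)) (f : Fin 3 → ℕ → ℂ) :
    (∑ i, ∑ j ∈ Finset.Icc 1 (A i - 1),
        (A i : ℂ) * der A c (.pt g1 u) (.pt g2 v) (.pt i j) 0 0 * f i j) = 0 := by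
  refine Finset.sum_eq_zero fun i _ => Finset.sum_eq_zero fun j hj => ?_
  rw [Finset.mem_Icc] at hj
  rw [D3full hA hcub g1 g2 i u v j hu hv ⟨hj.1, hj.2⟩,
    if_neg (fun hc => hg hc.1), mul_zero, zero_mul]

lemma SUM0b (hA : ∀ i, 1 ≤ A i) (hcub : CubicValues A c) (g1 g2 : Fin 3) (hg : g1 ≠ g2) (u v : ℕ)
    (hu : ValidPt A (g1,u)) (hv : ValidPt A (g2,v)) (f : Fin 3 → ℕ → ℂ) :
    (∑ i, ∑ j ∈ Finset.Icc 1 (A i - 1),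
        (A i : ℂ) * f i j * der A c (.pt i (A i - j)) (.pt g1 u) (.pt g2 v) 0 0) = 0 := by
  refine Finset.sum_eq_zero fun i _ => Finset.sum_eq_zero fun j hj => ?_
  rw [Finset.mem_Icc] at hj
  rw [D3full hA hcub i g1 g2 (A i - j) u v (validPt_mk (by omega) (by omega)) hu hv,
    if_neg (fun hc => hg hc.2.1), mul_zero]

lemma quadTerm_pt (a1 b1 d1 e1 : Fin 3) (a2 b2 d2 e2 : ℕ) (w : Pt) :
    quadTerm A c (.pt a1 a2) (.pt b1 b2) (.pt d1 d2) (.pt e1 e2) (Finsupp.single w 1) 0 =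
      (∑ i, ∑ j ∈ Finset.Icc 1 (A i - 1),
        (A i : ℂ) * der A c (.pt a1 a2) (.pt b1 b2) (.pt i j) 0 0 *
          der A c (.pt i (A i - j)) (.pt d1 d2) (.pt e1 e2) (Finsupp.single w 1) 0)
      + (∑ i, ∑ j ∈ Finset.Icc 1 (A i - 1),
        (A i : ℂ) * der A c (.pt a1 a2) (.pt b1 b2) (.pt i j) (Finsupp.single w 1) 0 *
          der A c (.pt i (A i - j)) (.pt d1 d2) (.pt e1 e2) 0 0) := by
  unfold quadTerm
  rw [antidiagonal_single_one, Finset.Nat.antidiagonal_zero]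
  rw [Finset.sum_pair (by
    intro h
    have := congrArg Prod.fst h
    simp only at this
    exact one_ne_zero ((Finsupp.single_eq_zero).1 this.symm))]
  simp only [Finset.sum_singleton]
  rw [der_mu_ptpt, der_ptpt_mu, der_mu_ptpt, der_ptpt_mu]
  ring

lemma valid_add {α β : Expv} (h1 : Valid A α) (h2 : Valid A β) : Valid A (α + β) :=
  fun p hp => (Finset.mem_union.1 (Finsupp.support_add hp)).elim (h1 p) (h2 p)

lemma valid_single {p : Pt} (hp : ValidPt A p) : Valid A (Finsupp.single p 1) :=
  fun q hq => by rwa [Finset.mem_singleton.1 (Finsupp.support_single_subset hq)]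

lemma deg_add (α β : Expv) : deg A (α + β) = deg A α + deg A β :=
  Finsupp.sum_add_index' (fun p => by simp) (fun p b1 b2 => by push_cast; ring)

lemma deg_single (p : Pt) :
    deg A (Finsupp.single p 1) = ((A p.1 : ℚ) - p.2) / A p.1 := by
  rw [deg, Finsupp.sum_single_index (by simp)]
  push_cast; ring

lemma killer (hA : ∀ i, 1 ≤ A i) (hadm : IsAdmissible A c) (hcub : CubicValues A c)
    (i₁ i₂ : Fin 3) (hne : i₁ ≠ i₂) (x y z p₂ : ℕ)
    (hx : ValidPt A (i₁,x)) (hy : ValidPt A (i₁,y)) (hz : ValidPt A (i₁,z))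
    (hp : ValidPt A (i₂,p₂)) (hp2 : 2 ≤ p₂) (hxy : A i₁ ≤ x + y) :
    c (Finsupp.single (i₁,x) 1 + Finsupp.single (i₁,y) 1 + Finsupp.single (i₁,z) 1
        + Finsupp.single (i₂,p₂) 1) 0 = 0 := by
  have hp1 : 1 ≤ p₂ := hp.1
  have hp2' : p₂ ≤ A i₂ - 1 := hp.2
  have hp' : ValidPt A (i₂, p₂ - 1) := validPt_mk (by omega) (by omega)
  have h1 : ValidPt A (i₂, 1) := validPt_mk le_rfl (by omega)
  have hw := hadm.wdvv (.pt i₂ 1) (.pt i₂ (p₂-1)) (.pt i₁ x) (.pt i₁ y)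
      h1 hp' hx hy (Finsupp.single (i₁,z) 1) (valid_single hz) 0
  rw [quadTerm_pt, quadTerm_pt,
      SUM1 hA hcub i₂ 1 (p₂-1) h1 hp',
      SUM2 hA hcub i₁ x y hx hy,
      SUM0a hA hcub i₂ i₁ (Ne.symm hne) 1 x h1 hx,
      SUM0b hA hcub i₂ i₁ (Ne.symm hne) (p₂-1) y hp' hy,
      if_pos (show 1 + (p₂ - 1) < A i₂ by omega),
      if_neg (show ¬ (x + y ≤ A i₁ - 1) by have := hA i₁; omega),
      show A i₂ - (1 + (p₂ - 1)) = A i₂ - p₂ from by omega,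
      show A i₂ - (A i₂ - p₂) = p₂ from by omega,
      der_val] at hw
  simp only [add_zero, zero_add] at hw
  have hd : ((dfac (Finsupp.single (i₁,z) 1) [(i₂,p₂),(i₁,x),(i₁,y)] : ℕ) : ℂ) ≠ 0 :=
    Nat.cast_ne_zero.2 (dfac_pos _ _).ne'
  have hc0 := (mul_eq_zero.1 hw).resolve_left hd
  rw [show (Finsupp.single (i₁,x) 1 + Finsupp.single (i₁,y) 1 + Finsupp.single (i₁,z) 1
      + Finsupp.single (i₂,p₂) 1 : Expv)
    = Finsupp.single (i₁,z) 1 + Finsupp.single (i₂,p₂) 1 + Finsupp.single (i₁,x) 1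
      + Finsupp.single (i₁,y) 1 from by abel]
  exact hc0

lemma move (hA : ∀ i, 1 ≤ A i) (hadm : IsAdmissible A c) (hcub : CubicValues A c)
    (i₁ i₂ : Fin 3) (hne : i₁ ≠ i₂) (x y z p₂ : ℕ)
    (hx : ValidPt A (i₁,x)) (hy : ValidPt A (i₁,y)) (hz : ValidPt A (i₁,z))
    (hp : ValidPt A (i₂,p₂)) (hz2 : 2 ≤ z) (hx1 : x + 1 ≤ A i₁ - 1)
    (hnext : c (Finsupp.single (i₁,x+1) 1 + Finsupp.single (i₁,y) 1
        + Finsupp.single (i₁,z-1) 1 + Finsupp.single (i₂,p₂) 1) 0 = 0) :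
    c (Finsupp.single (i₁,x) 1 + Finsupp.single (i₁,y) 1 + Finsupp.single (i₁,z) 1
        + Finsupp.single (i₂,p₂) 1) 0 = 0 := by
  have hz1 : 1 ≤ z := hz.1
  have hz2' : z ≤ A i₁ - 1 := hz.2
  have hxl : 1 ≤ x := hx.1
  have hxr : x ≤ A i₁ - 1 := hx.2
  have hz' : ValidPt A (i₁, z - 1) := validPt_mk (by omega) (by omega)
  have h1 : ValidPt A (i₁, 1) := validPt_mk le_rfl (by omega)
  have hw := hadm.wdvv (.pt i₁ 1) (.pt i₁ (z-1)) (.pt i₁ x) (.pt i₂ p₂)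
      h1 hz' hx hp (Finsupp.single (i₁,y) 1) (valid_single hy) 0
  rw [quadTerm_pt, quadTerm_pt,
      SUM1 hA hcub i₁ 1 (z-1) h1 hz',
      SUM0b hA hcub i₁ i₂ hne x p₂ hx hp,
      SUM1 hA hcub i₁ 1 x h1 hx,
      SUM0b hA hcub i₁ i₂ hne (z-1) p₂ hz' hp,
      if_pos (show 1 + (z - 1) < A i₁ by omega),
      if_pos (show 1 + x < A i₁ by omega),
      show A i₁ - (1 + (z - 1)) = A i₁ - z from by omega,
      show A i₁ - (A i₁ - z) = z from by omega,
      show A i₁ - (A i₁ - (1 + x)) = x + 1 from by omega,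
      der_val, der_val] at hw
  simp only [add_zero] at hw
  rw [show (Finsupp.single (i₁,y) 1 + Finsupp.single (i₁,x+1) 1 + Finsupp.single (i₁,z-1) 1
      + Finsupp.single (i₂,p₂) 1 : Expv)
    = Finsupp.single (i₁,x+1) 1 + Finsupp.single (i₁,y) 1 + Finsupp.single (i₁,z-1) 1
      + Finsupp.single (i₂,p₂) 1 from by abel, hnext, mul_zero] at hw
  have hd : ((dfac (Finsupp.single (i₁,y) 1) [(i₁,z),(i₁,x),(i₂,p₂)] : ℕ) : ℂ) ≠ 0 :=
    Nat.cast_ne_zero.2 (dfac_pos _ _).ne'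
  have hc0 := (mul_eq_zero.1 hw).resolve_left hd
  rw [show (Finsupp.single (i₁,x) 1 + Finsupp.single (i₁,y) 1 + Finsupp.single (i₁,z) 1
      + Finsupp.single (i₂,p₂) 1 : Expv)
    = Finsupp.single (i₁,y) 1 + Finsupp.single (i₁,z) 1 + Finsupp.single (i₁,x) 1
      + Finsupp.single (i₂,p₂) 1 from by abel]
  exact hc0

lemma main_aux (hA : ∀ i, 1 ≤ A i) (hadm : IsAdmissible A c) (hcub : CubicValues A c)
    (i₁ i₂ : Fin 3) (hne : i₁ ≠ i₂) (p₂ : ℕ) (hp : ValidPt A (i₂,p₂)) (hp2 : 2 ≤ p₂) :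
    ∀ z x y : ℕ, ValidPt A (i₁,x) → ValidPt A (i₁,y) → ValidPt A (i₁,z) →
      c (Finsupp.single (i₁,x) 1 + Finsupp.single (i₁,y) 1 + Finsupp.single (i₁,z) 1
          + Finsupp.single (i₂,p₂) 1) 0 = 0 := by
  intro z
  induction z using Nat.strong_induction_on with
  | _ z ih =>
    intro x y hx hy hz
    have hpl : 1 ≤ p₂ := hp.1
    have hpr : p₂ ≤ A i₂ - 1 := hp.2
    have hxl : 1 ≤ x := hx.1
    have hxr : x ≤ A i₁ - 1 := hx.2
    have hyl : 1 ≤ y := hy.1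
    have hyr : y ≤ A i₁ - 1 := hy.2
    have hzl : 1 ≤ z := hz.1
    have hzr : z ≤ A i₁ - 1 := hz.2
    by_cases hxy : A i₁ ≤ x + y
    · exact killer hA hadm hcub i₁ i₂ hne x y z p₂ hx hy hz hp hp2 hxy
    · push_neg at hxy
      by_contra hc
      have hval : Valid A (Finsupp.single (i₁,x) 1 + Finsupp.single (i₁,y) 1
          + Finsupp.single (i₁,z) 1 + Finsupp.single (i₂,p₂) 1) :=
        valid_add (valid_add (valid_add (valid_single hx) (valid_single hy))
          (valid_single hz)) (valid_single hp)
      have hdeg := hadm.homog _ hval 0 hc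
      rw [deg_add, deg_add, deg_add, deg_single, deg_single, deg_single, deg_single] at hdeg
      simp only [Nat.cast_zero, zero_mul, add_zero] at hdeg
      have hA1 : (0:ℚ) < A i₁ := by exact_mod_cast Nat.pos_of_ne_zero (by have := hA i₁; omega)
      have hA2 : (0:ℚ) < A i₂ := by exact_mod_cast Nat.pos_of_ne_zero (by have := hA i₂; omega)
      have hple : (p₂ : ℚ) + 1 ≤ (A i₂ : ℚ) := by
        exact_mod_cast (show p₂ + 1 ≤ A i₂ by omega)
      have hkey : (A i₁ : ℚ) < (x:ℚ) + y + z := by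
        field_simp at hdeg
        nlinarith [hdeg, hA1, hA2, hple, mul_pos hA1 hA2,
          mul_le_mul_of_nonneg_left hple hA1.le]
      have hkey' : A i₁ < x + y + z := by exact_mod_cast hkey
      have hz2 : 2 ≤ z := by omega
      have hzv : ValidPt A (i₁, z-1) := validPt_mk (by omega) (by omega)
      have hx1 : x + 1 ≤ A i₁ - 1 := by omega
      have hxv : ValidPt A (i₁, x+1) := validPt_mk (by omega) hx1
      exact hc (move hA hadm hcub i₁ i₂ hne x y z p₂ hx hy hz hp hz2 hx1
        (ih (z-1) (by omega) (x+1) y hxv hy hzv))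

end StepAux


/-- Sub-Lemma (Step 1-(iii), Case 1). -/
theorem step1_iii_case1 (A : Fin 3 → ℕ) (hA : ∀ i, 1 ≤ A i) (hA01 : A 0 ≤ A 1) (hA12 : A 1 ≤ A 2)
    (c : Expv → ℕ → ℂ) (hadm : IsAdmissible A c) (hcub : CubicValues A c)
    (i₁ i₂ : Fin 3) (hne : i₁ ≠ i₂) (j₁ j₁' j₁'' j₂ : ℕ)
    (hv₁ : ValidPt A (i₁, j₁)) (hv₁' : ValidPt A (i₁, j₁'))
    (hv₁'' : ValidPt A (i₁, j₁'')) (hv₂ : ValidPt A (i₂, j₂))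
    (ha₁ : 3 ≤ A i₁) (ha₂ : 3 ≤ A i₂) (hj₁' : 2 ≤ j₁') (hj₂ : 2 ≤ j₂) :
    c (e i₁ j₁ + e i₁ j₁' + e i₁ j₁'' + e i₂ j₂) 0 = 0 := by
  have h := main_aux hA hadm hcub i₁ i₂ hne j₂ hv₂ hj₂ j₁'' j₁ j₁' hv₁ hv₁' hv₁''
  simpa [e] using h

end FrobeniusUniqueness
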